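/- Let n be a positive integer, p a prime dividing n, and g₁, g₂ monic polynomials in ℤ[x]. If f(x) is a monic polynomial such that the ideal generated by g₁ and g₂ in (ℤ/nℤ)[x] equals the ideal generated by f, then f mod p equals gcd(g₁, g₂) computed in 𝔽_p[x] (up to monic normalization). -/
import Mathlib


open Polynomial

theorem stmt_7 (n : ℕ) (hn : 0 < n) (p : ℕ) [Fact p.Prime] (hdvd : p ∣ n)
    (g₁ g₂ : ℤ[X]) (hg₁ : g₁.Monic) (hg₂ : g₂.Monic)
    (f : (ZMod n)[X]) (hf : f.Monic)
    (hideal : Ideal.span {g₁.map (Int.castRingHom (ZMod n)), g₂.map (Int.castRingHom (ZMod n))}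
      = Ideal.span {f}) :
    f.map (ZMod.castHom hdvd (ZMod p)) =
      gcd (g₁.map (Int.castRingHom (ZMod p))) (g₂.map (Int.castRingHom (ZMod p))) := by
  set φ := ZMod.castHom hdvd (ZMod p)
  have hcomp : φ.comp (Int.castRingHom (ZMod n)) = Int.castRingHom (ZMod p) := by
    ext1; simp
  have key : Ideal.span ({g₁.map (Int.castRingHom (ZMod p)),
      g₂.map (Int.castRingHom (ZMod p))} : Set ((ZMod p)[X]))
      = Ideal.span {f.map φ} := by
    have := congrArg (Ideal.map (mapRingHom φ)) hideal
    simpa [Ideal.map_span, Set.image_insert_eq, map_map, hcomp] using this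
  have hg₁' : (g₁.map (Int.castRingHom (ZMod p))).Monic := hg₁.map _
  have hne : gcd (g₁.map (Int.castRingHom (ZMod p))) (g₂.map (Int.castRingHom (ZMod p))) ≠ 0 := by
    intro h
    rw [gcd_eq_zero_iff] at h; exact hg₁'.ne_zero h.1
  have hmonic : (gcd (g₁.map (Int.castRingHom (ZMod p)))
      (g₂.map (Int.castRingHom (ZMod p)))).Monic := by
    have := Polynomial.monic_normalize (p := gcd (g₁.map (Int.castRingHom (ZMod p)))
      (g₂.map (Int.castRingHom (ZMod p)))) hne
    rwa [normalize_gcd] at this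
  have hspan : Ideal.span ({f.map φ} : Set ((ZMod p)[X]))
      = Ideal.span {gcd (g₁.map (Int.castRingHom (ZMod p))) (g₂.map (Int.castRingHom (ZMod p)))} := by
    rw [← key, _root_.span_gcd]
  exact eq_of_monic_of_associated (hf.map _) hmonic
    (Ideal.span_singleton_eq_span_singleton.mp hspan)
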